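/- Let X and Y be complex Banach spaces, A ∈ B(X), B ∈ B(Y), C ∈ B(Y, X), and let M_C ∈ B(X ⊕ Y) be the upper-triangular operator matrix M_C(x, y) = (Ax + Cy, By). Then σ_l(M_C) ∪ S(A*) = σ_l(A) ∪ σ_l(B) ∪ S(A*), where σ_l denotes the left spectrum, A* the Banach-space adjoint of A, and S(A*) the set of points where A* fails to have the single valued extension property. -/

import Mathlib

set_option maxHeartbeats 1000000
set_option synthInstance.maxHeartbeats 400000
set_option linter.unusedSectionVars false

noncomputable section

open ContinuousLinearMap Metric Set

variable {E : Type*} [NormedAddCommGroup E] [NormedSpace ℂ E]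
variable {X Y : Type*} [NormedAddCommGroup X] [NormedSpace ℂ X] [CompleteSpace X]
  [NormedAddCommGroup Y] [NormedSpace ℂ Y] [CompleteSpace Y]

/-- The left spectrum: points where `T - z` has no left inverse in `B(E)`. -/
def leftSpectrum (T : E →L[ℂ] E) : Set ℂ :=
  {z | ¬ ∃ S : E →L[ℂ] E, S * (T - z • 1) = 1}

/-- `T` has the single valued extension property at `z₀`. -/
def HasSVEPAt (T : E →L[ℂ] E) (z₀ : ℂ) : Prop :=
  ∃ r > (0 : ℝ), ∀ V : Set ℂ, V ⊆ ball z₀ r → IsOpen V →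
    ∀ f : ℂ → E, AnalyticOnNhd ℂ f V → (∀ z ∈ V, (T - z • 1) (f z) = 0) →
      ∀ z ∈ V, f z = 0

/-- `S(T)`: the set of points where `T` fails to have the SVEP. -/
def svepFail (T : E →L[ℂ] E) : Set ℂ :=
  {z | ¬ HasSVEPAt T z}

/-- The Banach-space adjoint (dual map) of `T`, acting on the continuous dual. -/
def dualOp (T : E →L[ℂ] E) : (E →L[ℂ] ℂ) →L[ℂ] (E →L[ℂ] ℂ) :=
  (ContinuousLinearMap.compL ℂ E E ℂ).flip T

/-- The upper-triangular operator matrix `M_C (x, y) = (A x + C y, B y)` on `X ⊕ Y`. -/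
def ucMat (A : X →L[ℂ] X) (B : Y →L[ℂ] Y) (C : Y →L[ℂ] X) :
    (X × Y) →L[ℂ] (X × Y) :=
  (A.comp (ContinuousLinearMap.fst ℂ X Y) + C.comp (ContinuousLinearMap.snd ℂ X Y)).prod
    (B.comp (ContinuousLinearMap.snd ℂ X Y))

/-! ### Auxiliary lemmas -/

lemma not_mem_leftSpectrum {T : E →L[ℂ] E} {z : ℂ} :
    z ∉ leftSpectrum T ↔ ∃ S : E →L[ℂ] E, S * (T - z • 1) = 1 := by
  simp [leftSpectrum]

lemma dualOp_apply (T : E →L[ℂ] E) (φ : E →L[ℂ] ℂ) (x : E) : dualOp T φ x = φ (T x) := rfl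

lemma ucMat_apply (A : X →L[ℂ] X) (B : Y →L[ℂ] Y) (C : Y →L[ℂ] X) (v : X × Y) :
    ucMat A B C v = (A v.1 + C v.2, B v.2) := rfl

lemma leftInv_pointwise {T S : E →L[ℂ] E} {z : ℂ} (h : S * (T - z • 1) = 1) (x : E) :
    S (T x - z • x) = x := by
  have h' := ContinuousLinearMap.ext_iff.mp h x
  simpa [mul_apply, sub_apply, smul_apply, one_apply] using h'

lemma ucMat_sub_apply (A : X →L[ℂ] X) (B : Y →L[ℂ] Y) (C : Y →L[ℂ] X) (z : ℂ) (x : X) (y : Y) :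
    (ucMat A B C - z • 1) (x, y) = (A x + C y - z • x, B y - z • y) := by
  simp [ucMat_apply, sub_apply, smul_apply, one_apply, Prod.smul_mk, Prod.mk_sub_mk]

/-- From a left inverse of `M_C - z`, a pointwise left inverse of `A - z`. -/
lemma SA_pointwise {A : X →L[ℂ] X} {B : Y →L[ℂ] Y} {C : Y →L[ℂ] X} {z : ℂ}
    {S : (X × Y) →L[ℂ] X × Y} (hS : S * (ucMat A B C - z • 1) = 1) (x : X) :
    ((ContinuousLinearMap.fst ℂ X Y).comp (S.comp (ContinuousLinearMap.inl ℂ X Y)))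
      (A x - z • x) = x := by
  have h := ContinuousLinearMap.ext_iff.mp hS (x, 0)
  rw [mul_apply_eq_comp, one_apply_eq_self, ucMat_sub_apply] at h
  simp only [map_zero, add_zero, smul_zero, sub_zero] at h
  have : ((ContinuousLinearMap.fst ℂ X Y).comp
      (S.comp (ContinuousLinearMap.inl ℂ X Y))) (A x - z • x) = (S (A x - z • x, 0)).1 := rfl
  rw [this, h]

/-- Inclusion 1: `σₗ(M_C) ⊆ σₗ(A) ∪ σₗ(B)`. -/
lemma incl1 (A : X →L[ℂ] X) (B : Y →L[ℂ] Y) (C : Y →L[ℂ] X) :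
    leftSpectrum (ucMat A B C) ⊆ leftSpectrum A ∪ leftSpectrum B := by
  intro z hz
  by_contra h
  rw [mem_union, not_or] at h
  obtain ⟨hA, hB⟩ := h
  obtain ⟨SA, hSA⟩ := not_mem_leftSpectrum.mp hA
  obtain ⟨SB, hSB⟩ := not_mem_leftSpectrum.mp hB
  apply hz
  refine ⟨(SA.comp (ContinuousLinearMap.fst ℂ X Y) -
      (SA.comp C).comp (SB.comp (ContinuousLinearMap.snd ℂ X Y))).prod
      (SB.comp (ContinuousLinearMap.snd ℂ X Y)), ?_⟩
  refine ContinuousLinearMap.ext fun v => ?_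
  obtain ⟨x, y⟩ := v
  rw [mul_apply_eq_comp, ucMat_sub_apply, one_apply_eq_self]
  have h1 : SB (B y - z • y) = y := leftInv_pointwise hSB y
  show (SA (A x + C y - z • x) - SA (C (SB (B y - z • y))),
      SB (B y - z • y)) = (x, y)
  rw [h1]
  have h2 : SA (A x + C y - z • x) = x + SA (C y) := by
    have h3 : A x + C y - z • x = (A x - z • x) + C y := by abel
    rw [h3, map_add, leftInv_pointwise hSA x]
  rw [h2]
  simp

/-- Inclusion 2: `σₗ(A) ⊆ σₗ(M_C)`. -/
lemma incl2 (A : X →L[ℂ] X) (B : Y →L[ℂ] Y) (C : Y →L[ℂ] X) :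
    leftSpectrum A ⊆ leftSpectrum (ucMat A B C) := by
  intro z hz
  by_contra h
  obtain ⟨S, hS⟩ := not_mem_leftSpectrum.mp h
  apply hz
  refine ⟨(ContinuousLinearMap.fst ℂ X Y).comp (S.comp (ContinuousLinearMap.inl ℂ X Y)), ?_⟩
  refine ContinuousLinearMap.ext fun x => ?_
  rw [mul_apply_eq_comp, one_apply_eq_self]
  have : (A - z • 1) x = A x - z • x := by simp [sub_apply, smul_apply, one_apply]
  rw [this]
  exact SA_pointwise hS x

/-- Finch-type lemma: if `W` has SVEP at `z₀` and `W - z₀` has a right inverse, then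
`W - z₀` is injective (stated as trivial kernel). -/
lemma finch_inj {D : Type*} [NormedAddCommGroup D] [NormedSpace ℂ D] [CompleteSpace D]
    {W R : D →L[ℂ] D} {z₀ : ℂ} (hsvep : HasSVEPAt W z₀)
    (hR : (W - z₀ • 1) * R = 1) {φ : D} (hφ : (W - z₀ • 1) φ = 0) : φ = 0 := by
  obtain ⟨r, hr, hs⟩ := hsvep
  set ρ := min r (‖R‖ + 1)⁻¹ with hρdef
  have hρ : 0 < ρ := lt_min hr (by positivity)
  have hVsub : ball z₀ ρ ⊆ ball z₀ r := ball_subset_ball (min_le_left _ _)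
  have hunit : ∀ μ ∈ ball z₀ ρ, ‖(μ - z₀) • R‖ < 1 := by
    intro μ hμ
    have h1 : ‖μ - z₀‖ < ρ := by simpa [dist_eq_norm] using hμ
    have h2 : ‖μ - z₀‖ < (‖R‖ + 1)⁻¹ := h1.trans_le (min_le_right _ _)
    have h3 : ‖(μ - z₀) • R‖ ≤ ‖μ - z₀‖ * ‖R‖ := ContinuousLinearMap.opNorm_smul_le _ _
    have hRn : (0:ℝ) ≤ ‖R‖ := norm_nonneg R
    have h4 : (0:ℝ) < ‖R‖ + 1 := by linarith
    have h5 : ‖μ - z₀‖ * (‖R‖ + 1) < 1 := by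
      calc ‖μ - z₀‖ * (‖R‖ + 1) < (‖R‖ + 1)⁻¹ * (‖R‖ + 1) :=
            mul_lt_mul_of_pos_right h2 h4
        _ = 1 := inv_mul_cancel₀ (ne_of_gt h4)
    nlinarith [norm_nonneg (μ - z₀)]

  set f : ℂ → D := fun μ => Ring.inverse ((1 : D →L[ℂ] D) - (μ - z₀) • R) φ with hfdef
  have hfan : AnalyticOnNhd ℂ f (ball z₀ ρ) := by
    intro μ hμ
    have hg : AnalyticAt ℂ (fun μ : ℂ => (1 : D →L[ℂ] D) - (μ - z₀) • R) μ :=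
      analyticAt_const.sub ((analyticAt_id.sub analyticAt_const).smul analyticAt_const)
    have hinv : AnalyticAt ℂ (Ring.inverse : (D →L[ℂ] D) → (D →L[ℂ] D))
        ((1 : D →L[ℂ] D) - (μ - z₀) • R) :=
      analyticAt_inverse (Units.oneSub _ (hunit μ hμ))
    have hcomp : AnalyticAt ℂ
        (fun μ : ℂ => Ring.inverse ((1 : D →L[ℂ] D) - (μ - z₀) • R)) μ := by
      have h := AnalyticAt.comp (f := fun μ : ℂ => (1 : D →L[ℂ] D) - (μ - z₀) • R)
        (g := (Ring.inverse : (D →L[ℂ] D) → (D →L[ℂ] D))) hinv hg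
      exact h
    have heval : AnalyticAt ℂ (fun T : D →L[ℂ] D => T φ)
        (Ring.inverse ((1 : D →L[ℂ] D) - (μ - z₀) • R)) :=
      (ContinuousLinearMap.apply ℂ D φ).analyticAt _
    have h2 := AnalyticAt.comp (g := fun T : D →L[ℂ] D => T φ)
      (f := fun μ : ℂ => Ring.inverse ((1 : D →L[ℂ] D) - (μ - z₀) • R)) heval hcomp
    exact h2
  have heq : ∀ μ ∈ ball z₀ ρ, (W - μ • 1) (f μ) = 0 := by
    intro μ hμ
    set u : (D →L[ℂ] D)ˣ := Units.oneSub _ (hunit μ hμ) with hudef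
    have huval : (u : D →L[ℂ] D) = (1 : D →L[ℂ] D) - (μ - z₀) • R := rfl
    have h1 : (W - μ • 1) = (W - z₀ • 1) * (u : D →L[ℂ] D) := by
      rw [huval]
      calc W - μ • 1 = (W - z₀ • 1) - (μ - z₀) • (1 : D →L[ℂ] D) := by
            rw [sub_smul]; abel
        _ = (W - z₀ • 1) * 1 - (μ - z₀) • ((W - z₀ • 1) * R) := by rw [mul_one, hR]
        _ = (W - z₀ • 1) * ((1 : D →L[ℂ] D) - (μ - z₀) • R) := by
            rw [mul_sub, mul_one, mul_smul_comm]
    have hfμ : f μ = (↑u⁻¹ : D →L[ℂ] D) φ := by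
      simp only [hfdef, ← huval, Ring.inverse_unit]
    rw [hfμ, h1, mul_apply_eq_comp]
    have h2 : (u : D →L[ℂ] D) ((↑u⁻¹ : D →L[ℂ] D) φ) = φ := by
      rw [← mul_apply_eq_comp, u.mul_inv, one_apply_eq_self]
    rw [h2, hφ]
  have hz := hs (ball z₀ ρ) hVsub isOpen_ball f hfan heq z₀ (mem_ball_self hρ)
  simpa [hfdef, Ring.inverse_one] using hz

/-- Hahn–Banach: a nonzero continuous functional vanishing on a proper closed submodule. -/
lemma exists_functional {p : Submodule ℂ X} (hp : IsClosed (p : Set X)) {x : X} (hx : x ∉ p) :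
    ∃ φ : X →L[ℂ] ℂ, φ ≠ 0 ∧ ∀ y ∈ p, φ y = 0 := by
  haveI : IsClosed (p : Set X) := hp
  let m : X →L[ℂ] X ⧸ p :=
    LinearMap.mkContinuous p.mkQ 1 (fun y => by
      simpa using Submodule.Quotient.norm_mk_le p y)
  have hm : ∀ y : X, m y = Submodule.Quotient.mk y := fun y => rfl
  have hmx : m x ≠ 0 := by
    rw [hm]
    intro h
    exact hx ((Submodule.Quotient.mk_eq_zero p).mp h)
  obtain ⟨g, _, hgx⟩ := exists_dual_vector ℂ (m x) (norm_ne_zero_iff.mpr hmx)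
  refine ⟨g.comp m, ?_, ?_⟩
  · intro h
    have h0 : g (m x) = 0 := by
      have := ContinuousLinearMap.ext_iff.mp h x
      simpa [comp_apply] using this
    rw [hgx] at h0
    exact hmx (norm_eq_zero.mp (Complex.ofReal_eq_zero.mp h0))
  · intro y hy
    have h0 : m y = 0 := by rw [hm]; exact (Submodule.Quotient.mk_eq_zero p).mpr hy
    simp [comp_apply, h0]

/-- Inclusion 3: if `M_C - z` is left invertible and `A*` has SVEP at `z`,
then `B - z` is left invertible. -/
lemma incl3 {A : X →L[ℂ] X} {B : Y →L[ℂ] Y} {C : Y →L[ℂ] X} {z : ℂ}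
    (hM : ∃ S : (X × Y) →L[ℂ] X × Y, S * (ucMat A B C - z • 1) = 1)
    (hsvep : HasSVEPAt (dualOp A) z) :
    ∃ SB : Y →L[ℂ] Y, SB * (B - z • 1) = 1 := by
  obtain ⟨S, hS⟩ := hM
  set SA : X →L[ℂ] X :=
    (ContinuousLinearMap.fst ℂ X Y).comp (S.comp (ContinuousLinearMap.inl ℂ X Y)) with hSAdef
  set T₀ : X →L[ℂ] X := A - z • 1 with hT₀
  have hSA : ∀ x, SA (T₀ x) = x := by
    intro x
    have : T₀ x = A x - z • x := by simp [hT₀, sub_apply, smul_apply, one_apply]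
    rw [this]
    exact SA_pointwise hS x
  -- antilipschitz and closed range
  have hanti : AntilipschitzWith ‖SA‖₊ T₀ := by
    apply T₀.antilipschitz_of_bound
    intro x
    calc ‖x‖ = ‖SA (T₀ x)‖ := by rw [hSA]
      _ ≤ ‖SA‖ * ‖T₀ x‖ := SA.le_opNorm _
  have hclosed : IsClosed (Set.range T₀) := hanti.isClosed_range T₀.uniformContinuous
  -- dual right inverse
  set R : (X →L[ℂ] ℂ) →L[ℂ] (X →L[ℂ] ℂ) := dualOp SA with hRdef
  have hTR : (dualOp A - z • 1) * R = 1 := by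
    refine ContinuousLinearMap.ext fun φ => ?_
    refine ContinuousLinearMap.ext fun x => ?_
    have lhs : ((dualOp A - z • 1) * R) φ x = φ (SA (A x)) - z * φ (SA x) := by
      simp [mul_apply, sub_apply, smul_apply, one_apply, hRdef, dualOp_apply, smul_eq_mul]
    rw [lhs, one_apply_eq_self]
    have h1 : φ (SA (A x)) - z * φ (SA x) = φ (SA (A x - z • x)) := by
      rw [map_sub, map_smul, map_sub, map_smul, smul_eq_mul]
    rw [h1]
    have h2 : A x - z • x = T₀ x := by simp [hT₀, sub_apply, smul_apply, one_apply]
    rw [h2, hSA]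
  -- dual injectivity from SVEP
  have hinj : ∀ φ : X →L[ℂ] ℂ, (dualOp A - z • 1) φ = 0 → φ = 0 :=
    fun φ hφ => finch_inj hsvep hTR hφ
  -- surjectivity of T₀
  have hsurj : Function.Surjective T₀ := by
    by_contra hns
    have hex : ∃ x, ∀ y, T₀ y ≠ x := by
      by_contra h2
      push_neg at h2
      exact hns fun x => h2 x
    obtain ⟨x, hxr⟩ := hex
    have hxp : x ∉ LinearMap.range (T₀ : X →ₗ[ℂ] X) := by
      intro h
      obtain ⟨y, hy⟩ := LinearMap.mem_range.mp h
      exact hxr y hy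
    have hpc : IsClosed ((LinearMap.range (T₀ : X →ₗ[ℂ] X) : Submodule ℂ X) : Set X) := by
      have : ((LinearMap.range (T₀ : X →ₗ[ℂ] X) : Submodule ℂ X) : Set X) = Set.range T₀ := by
        ext w; simp [LinearMap.mem_range, Set.mem_range]
      rw [this]; exact hclosed
    obtain ⟨φ, hφne, hφ0⟩ := exists_functional hpc hxp
    apply hφne
    apply hinj
    refine ContinuousLinearMap.ext fun w => ?_
    have : (dualOp A - z • 1) φ w = φ (T₀ w) := by
      simp [sub_apply, smul_apply, one_apply, dualOp_apply, hT₀, map_sub, map_smul, smul_eq_mul]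
    rw [this]
    have : T₀ w ∈ LinearMap.range (T₀ : X →ₗ[ℂ] X) := LinearMap.mem_range.mpr ⟨w, rfl⟩
    rw [hφ0 _ this]
    rfl
  -- build the equivalence
  have hker : LinearMap.ker (T₀ : X →ₗ[ℂ] X) = ⊥ := by
    apply LinearMap.ker_eq_bot_of_injective
    intro a b hab
    have h9 : SA (T₀ a) = SA (T₀ b) := congrArg SA hab
    rwa [hSA, hSA] at h9
  have hrng : LinearMap.range (T₀ : X →ₗ[ℂ] X) = ⊤ := LinearMap.range_eq_top.mpr hsurj
  set e := ContinuousLinearEquiv.ofBijective T₀ hker hrng with hedef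
  -- the left inverse for B - z
  refine ⟨(ContinuousLinearMap.snd ℂ X Y).comp (S.comp (ContinuousLinearMap.inr ℂ X Y)), ?_⟩
  refine ContinuousLinearMap.ext fun y => ?_
  set x0 : X := - e.symm (C y) with hx0def
  have h5 : T₀ (e.symm (C y)) = C y :=
    ContinuousLinearEquiv.ofBijective_apply_symm_apply T₀ hker hrng (C y)
  have hx0 : T₀ x0 + C y = 0 := by
    rw [hx0def, map_neg, h5]; abel
  have hM0 : (ucMat A B C - z • 1) (x0, y) = (0, B y - z • y) := by
    rw [ucMat_sub_apply]
    have : A x0 + C y - z • x0 = T₀ x0 + C y := by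
      simp [hT₀, sub_apply, smul_apply, one_apply]; abel
    rw [Prod.mk.injEq]
    exact ⟨by rw [this, hx0], rfl⟩
  have h6 := ContinuousLinearMap.ext_iff.mp hS (x0, y)
  rw [mul_apply_eq_comp, hM0, one_apply_eq_self] at h6
  rw [mul_apply_eq_comp, one_apply_eq_self]
  have h7 : (B - z • 1) y = B y - z • y := by simp [sub_apply, smul_apply, one_apply]
  rw [h7]
  have h8 : ((ContinuousLinearMap.snd ℂ X Y).comp
      (S.comp (ContinuousLinearMap.inr ℂ X Y))) (B y - z • y) = (S (0, B y - z • y)).2 := rfl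
  rw [h8, h6]

theorem stmt11 (A : X →L[ℂ] X) (B : Y →L[ℂ] Y) (C : Y →L[ℂ] X) :
    leftSpectrum (ucMat A B C) ∪ svepFail (dualOp A) =
      leftSpectrum A ∪ leftSpectrum B ∪ svepFail (dualOp A) := by
  apply Set.Subset.antisymm
  · apply union_subset
    · exact (incl1 A B C).trans (subset_union_left)
    · exact subset_union_right
  · apply union_subset
    · apply union_subset
      · exact (incl2 A B C).trans subset_union_left
      · intro z hz
        by_cases h1 : z ∈ leftSpectrum (ucMat A B C)
        · exact Or.inl h1
        · by_cases h2 : HasSVEPAt (dualOp A) z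
          · exact absurd (incl3 (not_mem_leftSpectrum.mp h1) h2) hz
          · exact Or.inr h2
    · exact subset_union_right
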